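/- Define u : [a, 1) → ℝ for a fixed constant 0 < a < 1 by u(r) = (1/√2)·(−2√(1−r) − r/√(1−a) + 2√(1−a) + a/√(1−a)). Then for all a ≤ r < 1, u''(r) > u'(r)·(1 + u'(r)²). -/

import Mathlib

/-- For 0 < a < 1 and u(r) = (1/√2)(−2√(1−r) − r/√(1−a) + 2√(1−a) + a/√(1−a)):
u''(r) > u'(r)(1 + u'(r)²) for all a ≤ r < 1. -/
theorem stmt_6 (a : ℝ) (ha : 0 < a) (ha1 : a < 1)
    (u : ℝ → ℝ)
    (hu : u = fun r => (1 / Real.sqrt 2) *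
      (-2 * Real.sqrt (1 - r) - r / Real.sqrt (1 - a)
        + 2 * Real.sqrt (1 - a) + a / Real.sqrt (1 - a))) :
    ∀ r, a ≤ r → r < 1 →
      deriv (deriv u) r > deriv u r * (1 + (deriv u r) ^ 2) := by
  have hb : (0:ℝ) < Real.sqrt (1 - a) := Real.sqrt_pos.2 (by linarith)
  set c : ℝ := 1 / Real.sqrt 2 with hc
  set g : ℝ → ℝ := fun x => c * (1 / Real.sqrt (1 - x) - 1 / Real.sqrt (1 - a)) with hg
  have hd : ∀ x : ℝ, x < 1 → HasDerivAt u (g x) x := by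
    intro x hx
    have h1x : (0:ℝ) < 1 - x := by linarith
    have hsx : (0:ℝ) < Real.sqrt (1 - x) := Real.sqrt_pos.2 h1x
    have hs : HasDerivAt (fun r : ℝ => Real.sqrt (1 - r))
        (1 / (2 * Real.sqrt (1 - x)) * (-1)) x :=
      (Real.hasDerivAt_sqrt h1x.ne').comp x
        (by simpa using (hasDerivAt_id x).const_sub 1)
    rw [hu]
    have h2 : HasDerivAt (fun r : ℝ => -2 * Real.sqrt (1 - r) - r / Real.sqrt (1 - a)
        + 2 * Real.sqrt (1 - a) + a / Real.sqrt (1 - a))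
        ((-2) * (1 / (2 * Real.sqrt (1 - x)) * (-1)) - 1 / Real.sqrt (1 - a)) x := by
      have := ((hs.const_mul (-2)).sub
        (((hasDerivAt_id x).div_const (Real.sqrt (1 - a))))).add_const
        (2 * Real.sqrt (1 - a))
      have := this.add_const (a / Real.sqrt (1 - a))
      convert this using 2
      · rfl
      · rfl
      · simp only [Pi.sub_apply, id]
    have := h2.const_mul c
    convert this using 1
    · rfl
    · rfl
    ring
  intro r har hr1
  have h1r : (0:ℝ) < 1 - r := by linarith
  have hsr : (0:ℝ) < Real.sqrt (1 - r) := Real.sqrt_pos.2 h1r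
  have hderiv_eq : deriv u =ᶠ[nhds r] g := by
    filter_upwards [Iio_mem_nhds hr1] with x hx
    exact (hd x hx).deriv
  have hgd : HasDerivAt g (c * (1 / (2 * Real.sqrt (1 - r)) / (1 - r))) r := by
    have hs : HasDerivAt (fun x : ℝ => Real.sqrt (1 - x))
        (1 / (2 * Real.sqrt (1 - r)) * (-1)) r :=
      (Real.hasDerivAt_sqrt h1r.ne').comp r
        (by simpa using (hasDerivAt_id r).const_sub 1)
    have hinv : HasDerivAt (fun x : ℝ => (Real.sqrt (1 - x))⁻¹)
        (-(1 / (2 * Real.sqrt (1 - r)) * (-1)) / (Real.sqrt (1 - r))^2) r :=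
      hs.inv hsr.ne'
    have := (hinv.sub_const (1 / Real.sqrt (1 - a))).const_mul c
    convert this using 1
    · rfl
    · rfl
    · ext x; simp [hg, one_div]
    · rw [Real.sq_sqrt h1r.le]
      ring
  have key1 : deriv u r = g r := (hd r hr1).deriv
  have key2 : deriv (deriv u) r = c * (1 / (2 * Real.sqrt (1 - r)) / (1 - r)) := by
    rw [hderiv_eq.deriv_eq]; exact hgd.deriv
  rw [key1, key2]
  -- now pure inequality
  have hc0 : 0 < c := by positivity
  have hc2 : c ^ 2 = 1 / 2 := by
    rw [hc, div_pow, one_pow, Real.sq_sqrt (by norm_num : (0:ℝ) ≤ 2)]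
  have hsb : Real.sqrt (1 - r) ≤ Real.sqrt (1 - a) := Real.sqrt_le_sqrt (by linarith)
  have hb1 : Real.sqrt (1 - a) < 1 := by
    exact (Real.sqrt_lt' one_pos).2 (by nlinarith)
  set s := Real.sqrt (1 - r) with hsdef
  set b := Real.sqrt (1 - a) with hbdef
  have hs2 : s ^ 2 = 1 - r := Real.sq_sqrt h1r.le
  set p := 1 / s with hp
  set q := 1 / b with hqd
  have hq0 : 0 < q := by positivity
  have hq1 : 1 < q := (one_lt_div hb).2 hb1
  have hpq : q ≤ p := one_div_le_one_div_of_le hsr hsb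
  have ht : 0 ≤ p - q := by linarith
  have hLHS : 1 / (2 * s) / (1 - r) = p ^ 3 / 2 := by
    rw [← hs2, hp]; field_simp
  have hRHS : c * (p - q) * (1 + (c * (p - q)) ^ 2)
      = c * ((p - q) + (p - q) ^ 3 / 2) := by
    linear_combination (c * (p - q) ^ 3) * hc2
  have hgr : g r = c * (p - q) := by simp [hg, hp, hqd]; exact Or.inl hsdef.symm
  rw [hgr, hLHS, hRHS]
  have h32 : (0:ℝ) ≤ 3 * q ^ 2 - 2 := by nlinarith
  have key : (p - q) + (p - q) ^ 3 / 2 < p ^ 3 / 2 := by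
    nlinarith [mul_nonneg (mul_nonneg ht ht) hq0.le, mul_nonneg ht h32, pow_pos hq0 3]
  exact mul_lt_mul_of_pos_left key hc0
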